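/- Let u : ℝ² → ℝ be a C² solution of L_u(L_u u) = 0 on ℝ², and suppose there is a constant A ∈ ℝ such that (L_u u)(x,0) = A for all x ∈ ℝ. Then the function x ↦ u(x,0) is constant, equal to some B ∈ ℝ, and moreover u(x,t) = A·t + B for all (x,t) ∈ ℝ². -/

import Mathlib

open Set Real

/-- The operator `L_u` acting on `v`:  `(L_u v)(x,t) = ∂v/∂t + u·∂v/∂x`,
with coordinates `(x,t)` on `ℝ × ℝ`. -/
noncomputable def Lop (u v : ℝ × ℝ → ℝ) : ℝ × ℝ → ℝ :=
  fun p => fderiv ℝ v p (0, 1) + u p * fderiv ℝ v p (1, 0)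

private lemma fderiv_split (f : ℝ × ℝ → ℝ) (p : ℝ × ℝ) (a : ℝ) :
    fderiv ℝ f p (a, 1) = fderiv ℝ f p (0, 1) + a * fderiv ℝ f p (1, 0) := by
  have h : ((a, (1:ℝ)) : ℝ × ℝ) = (0, 1) + a • (1, 0) := by
    simp [Prod.ext_iff]
  rw [h, map_add, map_smul, smul_eq_mul]

private lemma burgers_key (u : ℝ × ℝ → ℝ) (hu : ContDiff ℝ 2 u)
    (hpde : ∀ p : ℝ × ℝ, Lop u (Lop u u) p = 0)
    (A : ℝ) (hA : ∀ x : ℝ, Lop u u (x, 0) = A)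
    (x0 t1 : ℝ) :
    u (x0 + u (x0, 0) * t1 + A * t1 ^ 2 / 2, t1) = u (x0, 0) + A * t1 := by
  set w : ℝ × ℝ → ℝ := Lop u u with hw
  set c : ℝ := u (x0, 0) with hc
  have hu1 : ContDiff ℝ 1 u := hu.of_le one_le_two
  have hfd : ContDiff ℝ 1 (fderiv ℝ u) :=
    hu.fderiv_right (by norm_num : (1:WithTop ℕ∞) + 1 ≤ 2)
  have hw1 : ContDiff ℝ 1 w := by
    rw [hw]
    exact (hfd.clm_apply contDiff_const).add (hu1.mul (hfd.clm_apply contDiff_const))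
  have hud : Differentiable ℝ u := hu1.differentiable one_ne_zero
  have hwd : Differentiable ℝ w := hw1.differentiable one_ne_zero
  -- the characteristic curve
  set γ : ℝ → ℝ × ℝ := fun t => (x0 + c * t + A * t ^ 2 / 2, t) with hγdef
  have hγ1 : ∀ t : ℝ, HasDerivAt (fun s : ℝ => x0 + c * s + A * s ^ 2 / 2) (c + A * t) t := by
    intro t
    have h := ((hasDerivAt_id' (x := t)).const_mul c).const_add x0 |>.add
      (((hasDerivAt_pow 2 t).const_mul A).div_const 2)
    refine h.congr_deriv ?_
    push_cast
    ring
  have hγ : ∀ t : ℝ, HasDerivAt γ (c + A * t, 1) t := fun t =>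
    (hγ1 t).prodMk (hasDerivAt_id' (x := t))
  have hU : ∀ t : ℝ, HasDerivAt (fun s => u (γ s)) (fderiv ℝ u (γ t) (c + A * t, 1)) t :=
    fun t => (hud (γ t)).hasFDerivAt.comp_hasDerivAt t (hγ t)
  have hW : ∀ t : ℝ, HasDerivAt (fun s => w (γ s)) (fderiv ℝ w (γ t) (c + A * t, 1)) t :=
    fun t => (hwd (γ t)).hasFDerivAt.comp_hasDerivAt t (hγ t)
  -- the deviation F
  set F : ℝ → ℝ × ℝ := fun t => (u (γ t) - (c + A * t), w (γ t) - A) with hFdef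
  have hF' : ∀ t : ℝ, HasDerivAt F
      (-(fderiv ℝ u (γ t) (1,0)) * (F t).1 + (F t).2,
        -(fderiv ℝ w (γ t) (1,0)) * (F t).1) t := by
    intro t
    have hlin : HasDerivAt (fun s : ℝ => c + A * s) A t := by
      have := ((hasDerivAt_id' (x := t)).const_mul A).const_add c
      simpa using this
    have h1 : HasDerivAt (fun s => u (γ s) - (c + A * s))
        (fderiv ℝ u (γ t) (c + A * t, 1) - A) t := (hU t).sub hlin
    have h2 : HasDerivAt (fun s => w (γ s) - A)
        (fderiv ℝ w (γ t) (c + A * t, 1)) t := (hW t).sub_const A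
    have hwdef : w (γ t) = fderiv ℝ u (γ t) (0,1) + u (γ t) * fderiv ℝ u (γ t) (1,0) := rfl
    have hpde' : fderiv ℝ w (γ t) (0,1) + u (γ t) * fderiv ℝ w (γ t) (1,0) = 0 := hpde (γ t)
    have e1 : fderiv ℝ u (γ t) (c + A * t, 1) - A
        = -(fderiv ℝ u (γ t) (1,0)) * (F t).1 + (F t).2 := by
      rw [fderiv_split]
      simp only [hFdef]
      rw [hwdef]
      ring
    have e2 : fderiv ℝ w (γ t) (c + A * t, 1)
        = -(fderiv ℝ w (γ t) (1,0)) * (F t).1 := by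
      rw [fderiv_split]
      simp only [hFdef]
      linear_combination hpde'
    rw [← e1, ← e2]
    exact h1.prodMk h2
  have hFcont : Continuous F :=
    continuous_iff_continuousAt.2 fun t => (hF' t).continuousAt
  -- coefficients and their bounds
  set α : ℝ → ℝ := fun t => fderiv ℝ u (γ t) (1,0) with hαdef
  set β : ℝ → ℝ := fun t => fderiv ℝ w (γ t) (1,0) with hβdef
  have hγc : Continuous γ := by
    apply Continuous.prodMk
    · fun_prop
    · exact continuous_id
  have hαc : Continuous α := ((hfd.continuous).comp hγc).clm_apply continuous_const
  have hβc : Continuous β :=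
    (((hw1.continuous_fderiv one_ne_zero)).comp hγc).clm_apply continuous_const
  set T : ℝ := |t1| + 1 with hTdef
  have hT0 : 0 < T := by positivity
  obtain ⟨C, hC⟩ := (isCompact_Icc (a := -T) (b := T)).exists_bound_of_continuousOn
      ((hαc.prodMk hβc).continuousOn)
  set K : NNReal := ⟨max C 0 + 1, by positivity⟩ with hKdef
  have hKcoe : (K : ℝ) = max C 0 + 1 := rfl
  set proj : ℝ → ℝ := fun t => max (-T) (min t T) with hprojdef
  have hprojmem : ∀ t : ℝ, proj t ∈ Icc (-T) T := by
    intro t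
    exact ⟨le_max_left _ _, max_le (by linarith) (min_le_right _ _)⟩
  set v : ℝ → ℝ × ℝ → ℝ × ℝ :=
    fun t x => (-(α (proj t)) * x.1 + x.2, -(β (proj t)) * x.1) with hvdef
  have hlip : ∀ t : ℝ, LipschitzWith K (v t) := by
    intro t
    have hb := hC (proj t) (hprojmem t)
    have hα : |α (proj t)| ≤ max C 0 :=
      le_trans (le_trans (norm_fst_le (α (proj t), β (proj t))) hb) (le_max_left _ _)
    have hβ : |β (proj t)| ≤ max C 0 :=
      le_trans (le_trans (norm_snd_le (α (proj t), β (proj t))) hb) (le_max_left _ _)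
    apply LipschitzWith.of_dist_le_mul
    intro x y
    rw [hKcoe, Prod.dist_eq, Prod.dist_eq, Real.dist_eq, Real.dist_eq, Real.dist_eq,
      Real.dist_eq]
    have hd1 : |x.1 - y.1| ≤ max |x.1 - y.1| |x.2 - y.2| := le_max_left _ _
    have hd2 : |x.2 - y.2| ≤ max |x.1 - y.1| |x.2 - y.2| := le_max_right _ _
    have hdnn : (0:ℝ) ≤ max |x.1 - y.1| |x.2 - y.2| :=
      le_trans (abs_nonneg _) hd1
    apply max_le
    · have e : (v t x).1 - (v t y).1 = α (proj t) * (y.1 - x.1) + (x.2 - y.2) := by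
        simp only [hvdef]; ring
      calc |(v t x).1 - (v t y).1| ≤ |α (proj t) * (y.1 - x.1)| + |x.2 - y.2| := by
            rw [e]; exact abs_add_le _ _
        _ = |α (proj t)| * |x.1 - y.1| + |x.2 - y.2| := by
            rw [abs_mul, abs_sub_comm y.1 x.1]
        _ ≤ (max C 0 + 1) * max |x.1 - y.1| |x.2 - y.2| := by
            nlinarith [abs_nonneg (α (proj t)), abs_nonneg (x.1 - y.1)]
    · have e : (v t x).2 - (v t y).2 = β (proj t) * (y.1 - x.1) := by
        simp only [hvdef]; ring
      calc |(v t x).2 - (v t y).2| = |β (proj t)| * |x.1 - y.1| := by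
            rw [e, abs_mul, abs_sub_comm y.1 x.1]
        _ ≤ (max C 0 + 1) * max |x.1 - y.1| |x.2 - y.2| := by
            nlinarith [abs_nonneg (β (proj t)), abs_nonneg (x.1 - y.1)]
  -- initial condition
  have hγ0 : γ 0 = (x0, 0) := by simp [hγdef]
  have hF0 : F 0 = (fun _ : ℝ => ((0:ℝ), (0:ℝ))) 0 := by
    have hwx0 : w (x0, 0) = A := hA x0
    simp [hFdef, hγ0, hwx0, hc]
  -- ODE uniqueness
  have h0T : (0:ℝ) ∈ Ioo (-T) T := ⟨by linarith, hT0⟩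
  have hsol : ∀ t ∈ Ioo (-T) T, HasDerivAt F (v t (F t)) t := by
    intro t ht
    have hp : proj t = t := by
      simp only [hprojdef]
      rw [min_eq_left (le_of_lt ht.2), max_eq_right (le_of_lt ht.1)]
    have := hF' t
    simpa only [hvdef, hp] using this
  have hzero : ∀ t ∈ Ioo (-T) T,
      HasDerivAt (fun _ : ℝ => ((0:ℝ), (0:ℝ))) (v t ((fun _ : ℝ => ((0:ℝ),(0:ℝ))) t)) t := by
    intro t _
    have : v t ((0:ℝ), (0:ℝ)) = (0, 0) := by simp [hvdef]
    rw [this]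
    exact hasDerivAt_const t _
  have huniq := ODE_solution_unique_of_mem_Icc (v := v) (s := fun _ => univ) (K := K)
      (fun t _ => (hlip t).lipschitzOnWith) h0T
      hFcont.continuousOn hsol (fun _ _ => mem_univ _)
      continuous_const.continuousOn hzero (fun _ _ => mem_univ _) hF0
  have ht1 : t1 ∈ Icc (-T) T :=
    ⟨by simp only [hTdef]; linarith [neg_abs_le t1], by
      simp only [hTdef]; linarith [le_abs_self t1]⟩
  have hFt1 : F t1 = ((0:ℝ), (0:ℝ)) := huniq ht1
  have h1 : u (γ t1) - (c + A * t1) = 0 := congrArg Prod.fst hFt1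
  have := sub_eq_zero.mp h1
  simpa [hγdef] using this

theorem stmt4 (u : ℝ × ℝ → ℝ) (hu : ContDiff ℝ 2 u)
    (hpde : ∀ p : ℝ × ℝ, Lop u (Lop u u) p = 0)
    (A : ℝ) (hA : ∀ x : ℝ, Lop u u (x, 0) = A) :
    ∃ B : ℝ, (∀ x : ℝ, u (x, 0) = B) ∧ ∀ x t : ℝ, u (x, t) = A * t + B := by
  have key := burgers_key u hu hpde A hA
  set B : ℝ := u (0, 0) with hB
  have hconst : ∀ x : ℝ, u (x, 0) = B := by
    intro x
    by_contra hne
    have hcd : u (x, 0) - B ≠ 0 := sub_ne_zero.mpr hne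
    set t : ℝ := (0 - x) / (u (x, 0) - B) with ht
    have hx : x + u (x, 0) * t + A * t ^ 2 / 2 = 0 + u (0, 0) * t + A * t ^ 2 / 2 := by
      have : (u (x, 0) - B) * t = 0 - x := by
        rw [ht]; field_simp
      simp only [← hB] at this ⊢
      linarith [this]
    have h1 := key x t
    have h2 := key 0 t
    rw [hx] at h1
    rw [h2] at h1
    have : u (x, 0) = B := by simpa [← hB] using by linarith [h1]
    exact hne this
  refine ⟨B, hconst, ?_⟩
  intro x t
  have h := key (x - B * t - A * t ^ 2 / 2) t
  rw [hconst (x - B * t - A * t ^ 2 / 2)] at h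
  have hpt : x - B * t - A * t ^ 2 / 2 + B * t + A * t ^ 2 / 2 = x := by ring
  rw [hpt] at h
  rw [h]; ring
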